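/- Let m1, m2 be integers with m1 ≥ 2 and m2 ≥ 2 that are not both even, or (m1, m2) = (2, 2). Set s := (1/2)·(1 − √(m2/(m1+m2))) and n := 2(m1+m2). Then s · ∫₀^{π/4} sin^{m1}(2x)·cos^{m2}(2x) / sin²(x) dx < ((n+2)/n) · ∫₀^{π/2} sin^{m1}(x)·cos^{m2}(x) dx. -/

import Mathlib

open Real intervalIntegral

private lemma key_poly (x y : ℝ) (hx : 2 ≤ x) (hy : 2 ≤ y) :
    ((x+y)^2 - (x+y+1)*(x-1))^2 < y*(x+y)^3 := by
  nlinarith [mul_nonneg (sub_nonneg.2 hx) (sub_nonneg.2 hy), sq_nonneg (x-2), sq_nonneg (y-2),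
    sq_nonneg (x+y-4), mul_nonneg (mul_nonneg (sub_nonneg.2 hx) (sub_nonneg.2 hy)) (sub_nonneg.2 hy),
    mul_nonneg (mul_nonneg (sub_nonneg.2 hx) (sub_nonneg.2 hx)) (sub_nonneg.2 hy)]

private lemma key_sqrt (x y : ℝ) (hx : 2 ≤ x) (hy : 2 ≤ y) :
    1 - Real.sqrt (y/(x+y)) < (x+y+1)*(x-1)/(x+y)^2 := by
  have hN : (0:ℝ) < x + y := by linarith
  set T := (x+y+1)*(x-1)/(x+y)^2 with hT
  rcases le_or_gt (1 - T) 0 with h0 | h0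
  · have : 0 < Real.sqrt (y/(x+y)) := Real.sqrt_pos.2 (by positivity)
    linarith
  · have h1 : (1 - T)^2 < y/(x+y) := by
      have e : 1 - T = ((x+y)^2 - (x+y+1)*(x-1))/(x+y)^2 := by
        rw [hT]; field_simp
      rw [e, div_pow, div_lt_div_iff₀ (by positivity) hN]
      have hp := key_poly x y hx hy
      nlinarith [hp, hN, sq_nonneg ((x+y)^2 - (x+y+1)*(x-1))]
    have := (Real.lt_sqrt (le_of_lt h0)).2 h1
    linarith

private lemma reduction (a b : ℕ) :
    ((a:ℝ)+(b:ℝ)+2) * ∫ x in (0:ℝ)..(π/2), sin x ^ (a+2) * cos x ^ b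
      = ((a:ℝ)+1) * ∫ x in (0:ℝ)..(π/2), sin x ^ a * cos x ^ b := by
  have hderiv : ∀ x ∈ Set.uIcc (0:ℝ) (π/2),
      HasDerivAt (fun x => sin x ^ (a+1) * cos x ^ (b+1))
        (((a:ℝ)+1) * (sin x ^ a * cos x ^ (b+2))
          - ((b:ℝ)+1) * (sin x ^ (a+2) * cos x ^ b)) x := by
    intro x _
    have h : HasDerivAt (fun x => sin x ^ (a+1) * cos x ^ (b+1))
        ((↑(a+1) * sin x ^ (a+1-1) * cos x) * cos x ^ (b+1)
        + sin x ^ (a+1) * (↑(b+1) * cos x ^ (b+1-1) * (-sin x))) x :=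
      ((Real.hasDerivAt_sin x).pow (a+1)).mul ((Real.hasDerivAt_cos x).pow (b+1))
    have e : (↑(a+1) * sin x ^ (a+1-1) * cos x) * cos x ^ (b+1)
        + sin x ^ (a+1) * (↑(b+1) * cos x ^ (b+1-1) * (-sin x))
        = ((a:ℝ)+1) * (sin x ^ a * cos x ^ (b+2))
          - ((b:ℝ)+1) * (sin x ^ (a+2) * cos x ^ b) := by
      simp only [Nat.add_sub_cancel]
      push_cast
      ring
    rw [e] at h
    exact h
  have hcont : Continuous fun x => ((a:ℝ)+1) * (sin x ^ a * cos x ^ (b+2))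
      - ((b:ℝ)+1) * (sin x ^ (a+2) * cos x ^ b) := by continuity
  have h0 : ∫ x in (0:ℝ)..(π/2),
      (((a:ℝ)+1) * (sin x ^ a * cos x ^ (b+2)) - ((b:ℝ)+1) * (sin x ^ (a+2) * cos x ^ b))
      = 0 := by
    rw [integral_eq_sub_of_hasDerivAt hderiv (hcont.intervalIntegrable _ _)]
    simp [pow_succ]
  have hi1 : IntervalIntegrable (fun x => sin x ^ a * cos x ^ (b+2)) MeasureTheory.volume 0 (π/2) :=
    (by continuity : Continuous fun x => sin x ^ a * cos x ^ (b+2)).intervalIntegrable _ _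
  have hi2 : IntervalIntegrable (fun x => sin x ^ (a+2) * cos x ^ b) MeasureTheory.volume 0 (π/2) :=
    (by continuity : Continuous fun x => sin x ^ (a+2) * cos x ^ b).intervalIntegrable _ _
  have hi3 : IntervalIntegrable (fun x => sin x ^ a * cos x ^ b) MeasureTheory.volume 0 (π/2) :=
    (by continuity : Continuous fun x => sin x ^ a * cos x ^ b).intervalIntegrable _ _
  have hsplit : (∫ x in (0:ℝ)..(π/2), sin x ^ a * cos x ^ (b+2))
      = (∫ x in (0:ℝ)..(π/2), sin x ^ a * cos x ^ b)
        - ∫ x in (0:ℝ)..(π/2), sin x ^ (a+2) * cos x ^ b := by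
    rw [← integral_sub hi3 hi2]
    apply integral_congr
    intro x _
    simp only [pow_add, cos_sq']
    ring
  rw [integral_sub ((hi1.const_mul _)) ((hi2.const_mul _)), integral_const_mul,
    integral_const_mul, hsplit] at h0
  linarith [h0]

private lemma K_split (c b : ℕ) :
    (∫ x in (0:ℝ)..(π/4), sin (2*x) ^ (c+2) * cos (2*x) ^ b / sin x ^ 2)
      = (∫ u in (0:ℝ)..(π/2), sin u ^ c * cos u ^ b)
        + ∫ u in (0:ℝ)..(π/2), sin u ^ c * cos u ^ (b+1) := by
  have hpi : (0:ℝ) < π/4 := by positivity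
  have h1 : (∫ x in (0:ℝ)..(π/4), sin (2*x) ^ (c+2) * cos (2*x) ^ b / sin x ^ 2)
      = ∫ x in (0:ℝ)..(π/4), 2*(1+cos (2*x)) * (sin (2*x) ^ c * cos (2*x) ^ b) := by
    rw [integral_of_le hpi.le, integral_of_le hpi.le]
    apply MeasureTheory.setIntegral_congr_fun measurableSet_Ioc
    intro x hx
    have hxpi : x < π := lt_of_le_of_lt hx.2 (by linarith [pi_pos])
    have hs : sin x ≠ 0 := ne_of_gt (sin_pos_of_pos_of_lt_pi hx.1 hxpi)
    simp only [sin_two_mul, cos_two_mul]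
    field_simp
    ring
  rw [h1]
  have h2 : (∫ x in (0:ℝ)..(π/4), 2*(1+cos (2*x)) * (sin (2*x) ^ c * cos (2*x) ^ b))
      = (2:ℝ)⁻¹ • ∫ u in (0:ℝ)..(π/2), 2*(1+cos u) * (sin u ^ c * cos u ^ b) := by
    have := integral_comp_mul_left (fun u => 2*(1+cos u) * (sin u ^ c * cos u ^ b))
      (a := (0:ℝ)) (b := π/4) (two_ne_zero)
    simpa [mul_zero, show (2:ℝ) * (π/4) = π/2 by ring] using this
  rw [h2]
  have hi1 : IntervalIntegrable (fun u => sin u ^ c * cos u ^ b) MeasureTheory.volume 0 (π/2) :=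
    (by continuity : Continuous fun u => sin u ^ c * cos u ^ b).intervalIntegrable _ _
  have hi2 : IntervalIntegrable (fun u => sin u ^ c * cos u ^ (b+1)) MeasureTheory.volume 0 (π/2) :=
    (by continuity : Continuous fun u => sin u ^ c * cos u ^ (b+1)).intervalIntegrable _ _
  have h3 : (∫ u in (0:ℝ)..(π/2), 2*(1+cos u) * (sin u ^ c * cos u ^ b))
      = 2 * ((∫ u in (0:ℝ)..(π/2), sin u ^ c * cos u ^ b)
        + ∫ u in (0:ℝ)..(π/2), sin u ^ c * cos u ^ (b+1)) := by
    rw [← integral_add hi1 hi2, ← integral_const_mul]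
    apply integral_congr
    intro x _
    simp only [pow_succ]
    ring
  rw [h3]
  simp

/-- let `m1, m2 ≥ 2` be integers, not both even (or `(m1, m2) = (2, 2)`),
`s = (1/2)·(1 − √(m2/(m1+m2)))` and `n = 2(m1+m2)`. Then
`s·∫₀^{π/4} sin^{m1}(2x)·cos^{m2}(2x)/sin²x dx
  < ((n+2)/n)·∫₀^{π/2} sin^{m1}x·cos^{m2}x dx`  (the inequality `K₁ < ((n+2)/n)·G`). -/
theorem K1_lt_G (m1 m2 : ℕ) (hm1 : 2 ≤ m1) (hm2 : 2 ≤ m2)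
    (h : ¬(Even m1 ∧ Even m2) ∨ (m1 = 2 ∧ m2 = 2)) :
    (1 / 2) * (1 - Real.sqrt ((m2 : ℝ) / ((m1 : ℝ) + m2))) *
        ∫ x in (0 : ℝ)..(Real.pi / 4),
          Real.sin (2 * x) ^ m1 * Real.cos (2 * x) ^ m2 / Real.sin x ^ 2 <
      ((2 * ((m1 : ℝ) + m2) + 2) / (2 * ((m1 : ℝ) + m2))) *
        ∫ x in (0 : ℝ)..(Real.pi / 2), Real.sin x ^ m1 * Real.cos x ^ m2 := by
  clear h
  obtain ⟨c, rfl⟩ : ∃ c, m1 = c + 2 := ⟨m1 - 2, by omega⟩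
  have hK := K_split c m2
  have hred0 := reduction c m2
  rw [hK]
  set B := ∫ u in (0:ℝ)..(π/2), sin u ^ c * cos u ^ m2 with hBdef
  set C := ∫ u in (0:ℝ)..(π/2), sin u ^ c * cos u ^ (m2+1) with hCdef
  set G := ∫ u in (0:ℝ)..(π/2), sin u ^ (c+2) * cos u ^ m2 with hGdef
  set x : ℝ := ((c:ℝ) + 2) with hxdef
  set y : ℝ := (m2:ℝ) with hydef
  have hx : (2:ℝ) ≤ x := by
    rw [hxdef]; linarith [(Nat.cast_nonneg c : (0:ℝ) ≤ c)]
  have hy : (2:ℝ) ≤ y := by rw [hydef]; exact_mod_cast hm2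
  have hN : (0:ℝ) < x + y := by linarith
  have hcast : ((c + 2 : ℕ) : ℝ) = x := by rw [hxdef]; push_cast; ring
  rw [hcast]
  have hred : (x + y) * G = (x - 1) * B := by
    rw [hxdef, hydef]
    push_cast at hred0 ⊢
    linear_combination hred0
  have hCB : C ≤ B := by
    rw [hCdef, hBdef]
    apply integral_mono_on (by positivity) ?_ ?_
    · intro t ht
      have h1 : 0 ≤ sin t ^ c :=
        pow_nonneg (sin_nonneg_of_nonneg_of_le_pi ht.1 (by linarith [pi_pos, ht.2])) c
      have hc0 : 0 ≤ cos t := cos_nonneg_of_mem_Icc ⟨by linarith [ht.1, pi_pos], ht.2⟩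
      have hc1 : cos t ≤ 1 := cos_le_one t
      exact mul_le_mul_of_nonneg_left (pow_le_pow_of_le_one hc0 hc1 (by omega)) h1
    · exact (by continuity : Continuous fun u => sin u ^ c * cos u ^ (m2+1)).intervalIntegrable _ _
    · exact (by continuity : Continuous fun u => sin u ^ c * cos u ^ m2).intervalIntegrable _ _
  have hB : 0 < B := by
    rw [hBdef]
    apply intervalIntegral_pos_of_pos_on
      ((by continuity : Continuous fun u => sin u ^ c * cos u ^ m2).intervalIntegrable _ _)
      ?_ (by positivity)
    intro t ht
    have hs : 0 < sin t := sin_pos_of_pos_of_lt_pi ht.1 (by linarith [pi_pos, ht.2])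
    have hc : 0 < cos t := cos_pos_of_mem_Ioo ⟨by linarith [ht.1, pi_pos], ht.2⟩
    positivity
  set S := Real.sqrt (y/(x+y)) with hSdef
  have hS0 : 0 ≤ S := Real.sqrt_nonneg _
  have hS1 : S ≤ 1 := by
    rw [hSdef]
    calc Real.sqrt (y/(x+y)) ≤ Real.sqrt 1 :=
          Real.sqrt_le_sqrt (by rw [div_le_one hN]; linarith)
      _ = 1 := Real.sqrt_one
  have hkey : 1 - S < (x+y+1)*(x-1)/(x+y)^2 := key_sqrt x y hx hy
  have A1 : (1/2) * (1 - S) * (B + C) ≤ (1 - S) * B := by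
    have h2B : B + C ≤ 2*B := by linarith
    have hnn : 0 ≤ (1/2) * (1 - S) := by linarith
    calc (1/2)*(1-S)*(B+C) ≤ (1/2)*(1-S)*(2*B) := mul_le_mul_of_nonneg_left h2B hnn
      _ = (1-S)*B := by ring
  have A2 : (1 - S) * B < ((x+y+1)*(x-1)/(x+y)^2) * B :=
    mul_lt_mul_of_pos_right hkey hB
  have A3 : ((x+y+1)*(x-1)/(x+y)^2) * B = ((2*(x+y)+2)/(2*(x+y))) * G := by
    rw [div_mul_eq_mul_div, div_mul_eq_mul_div, div_eq_div_iff (by positivity) (by positivity)]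
    linear_combination (-(2*(x+y)+2)*(x+y)) * hred
  linarith
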